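/- For every τ in the upper half-plane, θ[1;0]²·θ[1;1/4]·θ[1;3/4] − θ[1;1/4]²·θ[1;1/2]² + θ[1;1/2]²·θ[1;3/4]² = 0, where all theta constants are evaluated at (0,τ). -/

import Mathlib

open Complex

/-- Theta function with characteristics `[ε; ε']` of Farkas and Kra. -/
noncomputable def thetaChar (ε ε' : ℝ) (ζ τ : ℂ) : ℂ :=
  ∑' n : ℤ, Complex.exp (2 * (Real.pi : ℂ) * I *
    ((1 / 2) * ((n : ℂ) + (ε : ℂ) / 2) ^ 2 * τ + ((n : ℂ) + (ε : ℂ) / 2) * (ζ + (ε' : ℂ) / 2)))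

namespace StmtAux14

variable {A B : ℂ}

lemma summable_norm_zpow (hA0 : A ≠ 0) (hA : ‖A‖ < 1) (hB : ‖B‖ = 1)
    (p q : ℤ → ℤ) (hp : ∀ n, |n| ≤ p n) :
    Summable fun n : ℤ => ‖A ^ p n * B ^ q n‖ := by
  have hR0 : 0 < ‖A‖ := norm_pos_iff.mpr hA0
  have hgeom : Summable fun n : ℤ => ‖A‖ ^ |n| := by
    apply Summable.of_nat_of_neg
    · simpa using summable_geometric_of_lt_one hR0.le hA
    · simpa using summable_geometric_of_lt_one hR0.le hA
  refine hgeom.of_nonneg_of_le (fun n => norm_nonneg _) (fun n => ?_)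
  rw [norm_mul, norm_zpow, norm_zpow, hB, one_zpow, mul_one]
  exact zpow_le_zpow_right_of_le_one₀ hR0 hA.le (hp n)

noncomputable def evenEquiv : ℤ × ℤ ≃ {p : ℤ × ℤ // Even (p.1 + p.2)} :=
  Equiv.ofBijective (fun cd => ⟨(cd.1 + cd.2, cd.1 - cd.2), ⟨cd.1, by ring⟩⟩) (by
    constructor
    · rintro ⟨c, d⟩ ⟨c', d'⟩ h
      simp only [Subtype.mk.injEq, Prod.mk.injEq, Subtype.ext_iff] at h
      have : c = c' ∧ d = d' := by omega
      simp [this.1, this.2]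
    · rintro ⟨⟨n, m⟩, ⟨k, hk⟩⟩
      refine ⟨(k, n - k), ?_⟩
      apply Subtype.ext
      simp only [Prod.mk.injEq]
      omega)

noncomputable def oddEquiv :
    ℤ × ℤ ≃ {p : ℤ × ℤ // p ∈ ({p : ℤ × ℤ | Even (p.1 + p.2)} : Set (ℤ × ℤ))ᶜ} :=
  Equiv.ofBijective (fun cd => ⟨(cd.1 + cd.2, cd.1 - cd.2 - 1), by
      rintro ⟨k, hk⟩
      omega⟩) (by
    constructor
    · rintro ⟨c, d⟩ ⟨c', d'⟩ h
      simp only [Subtype.mk.injEq, Prod.mk.injEq] at h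
      have : c = c' ∧ d = d' := by omega
      simp [this.1, this.2]
    · rintro ⟨⟨n, m⟩, h⟩
      rcases Int.even_or_odd (n + m) with he | ⟨k, hk⟩
      · exact absurd he h
      · refine ⟨(k + 1, n - k - 1), ?_⟩
        apply Subtype.ext
        simp only [Prod.mk.injEq]
        omega)

/-- theta-type series -/
noncomputable def T (A B : ℂ) (k : ℤ) : ℂ :=
  ∑' n : ℤ, A ^ ((2 * n + 1) ^ 2) * B ^ (k * (2 * n + 1))

noncomputable def E (A B : ℂ) (u : ℤ) : ℂ := ∑' c : ℤ, A ^ (8 * c ^ 2) * B ^ (2 * u * c)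

noncomputable def O (A B : ℂ) (u : ℤ) : ℂ :=
  ∑' c : ℤ, A ^ (2 * (2 * c + 1) ^ 2) * B ^ (u * (2 * c + 1))

lemma hpT : ∀ n : ℤ, |n| ≤ (2 * n + 1) ^ 2 := by
  intro n; rcases abs_cases n with ⟨h1, h2⟩ | ⟨h1, h2⟩ <;> nlinarith
lemma hpE : ∀ n : ℤ, |n| ≤ 8 * n ^ 2 := by
  intro n; rcases abs_cases n with ⟨h1, h2⟩ | ⟨h1, h2⟩ <;> nlinarith
lemma hpO : ∀ n : ℤ, |n| ≤ 2 * (2 * n + 1) ^ 2 := by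
  intro n; rcases abs_cases n with ⟨h1, h2⟩ | ⟨h1, h2⟩ <;> nlinarith

variable (hA0 : A ≠ 0) (hB0 : B ≠ 0) (hA : ‖A‖ < 1) (hB : ‖B‖ = 1)
  (hB8 : B ^ (8 : ℤ) = -1)

set_option linter.unusedSectionVars false

include hA0 hB0 hA hB in
lemma T_mul_T (j k : ℤ) :
    T A B j * T A B k = O A B (j + k) * E A B (j - k) + E A B (j + k) * O A B (j - k) := by
  have sT : ∀ l : ℤ, Summable fun n : ℤ => ‖A ^ ((2 * n + 1) ^ 2) * B ^ (l * (2 * n + 1))‖ :=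
    fun l => summable_norm_zpow hA0 hA hB _ _ hpT
  have sE : ∀ u : ℤ, Summable fun c : ℤ => ‖A ^ (8 * c ^ 2) * B ^ (2 * u * c)‖ :=
    fun u => summable_norm_zpow hA0 hA hB _ _ hpE
  have sO : ∀ u : ℤ, Summable fun c : ℤ => ‖A ^ (2 * (2 * c + 1) ^ 2) * B ^ (u * (2 * c + 1))‖ :=
    fun u => summable_norm_zpow hA0 hA hB _ _ hpO
  have key : ∀ (x y z w : ℤ), x = z → y = w → A ^ x * B ^ y = A ^ z * B ^ w := by
    rintro x y z w rfl rfl; rfl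
  rw [T, T, tsum_mul_tsum_of_summable_norm (sT j) (sT k),
    ← (summable_mul_of_summable_norm (sT j) (sT k)).tsum_subtype_add_tsum_subtype_compl
      {p : ℤ × ℤ | Even (p.1 + p.2)}]
  congr 1
  · refine ((Equiv.tsum_eq evenEquiv (fun x : {p : ℤ × ℤ // Even (p.1 + p.2)} =>
        A ^ ((2 * x.val.1 + 1) ^ 2) * B ^ (j * (2 * x.val.1 + 1)) *
          (A ^ ((2 * x.val.2 + 1) ^ 2) * B ^ (k * (2 * x.val.2 + 1)))))).symm.trans ?_
    refine (tsum_congr (fun cd : ℤ × ℤ => ?_)).trans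
      (tsum_mul_tsum_of_summable_norm (sO (j + k)) (sE (j - k))).symm
    show A ^ ((2 * (evenEquiv cd).val.1 + 1) ^ 2) * B ^ (j * (2 * (evenEquiv cd).val.1 + 1)) *
        (A ^ ((2 * (evenEquiv cd).val.2 + 1) ^ 2) * B ^ (k * (2 * (evenEquiv cd).val.2 + 1)))
      = A ^ (2 * (2 * cd.1 + 1) ^ 2) * B ^ ((j + k) * (2 * cd.1 + 1)) *
        (A ^ (8 * cd.2 ^ 2) * B ^ (2 * (j - k) * cd.2))
    obtain ⟨c, d⟩ := cd
    simp only [evenEquiv, Equiv.ofBijective_apply, Equiv.ofBijective, Equiv.coe_fn_mk]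
    rw [mul_mul_mul_comm, ← zpow_add₀ hA0, ← zpow_add₀ hB0,
      mul_mul_mul_comm, ← zpow_add₀ hA0, ← zpow_add₀ hB0]
    exact key _ _ _ _ (by ring) (by ring)
  · refine ((Equiv.tsum_eq oddEquiv (fun x =>
        A ^ ((2 * x.val.1 + 1) ^ 2) * B ^ (j * (2 * x.val.1 + 1)) *
          (A ^ ((2 * x.val.2 + 1) ^ 2) * B ^ (k * (2 * x.val.2 + 1)))))).symm.trans ?_
    refine (tsum_congr (fun cd : ℤ × ℤ => ?_)).trans
      (tsum_mul_tsum_of_summable_norm (sE (j + k)) (sO (j - k))).symm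
    show A ^ ((2 * (oddEquiv cd).val.1 + 1) ^ 2) * B ^ (j * (2 * (oddEquiv cd).val.1 + 1)) *
        (A ^ ((2 * (oddEquiv cd).val.2 + 1) ^ 2) * B ^ (k * (2 * (oddEquiv cd).val.2 + 1)))
      = A ^ (8 * cd.1 ^ 2) * B ^ (2 * (j + k) * cd.1) *
        (A ^ (2 * (2 * cd.2 + 1) ^ 2) * B ^ ((j - k) * (2 * cd.2 + 1)))
    obtain ⟨c, d⟩ := cd
    simp only [oddEquiv, Equiv.ofBijective_apply, Equiv.ofBijective, Equiv.coe_fn_mk]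
    rw [mul_mul_mul_comm, ← zpow_add₀ hA0, ← zpow_add₀ hB0,
      mul_mul_mul_comm, ← zpow_add₀ hA0, ← zpow_add₀ hB0]
    exact key _ _ _ _ (by ring) (by ring)

include hB0 hB8 in
lemma B_pow_odd (m : ℤ) (hm : Odd m) : B ^ (-8 * m) = -1 := by
  rw [show (-8 : ℤ) * m = 8 * (-m) by ring, zpow_mul, hB8]
  exact (hm.neg).neg_one_zpow

include hB0 hB8 in
lemma B_pow_16 (c : ℤ) : B ^ (16 * c) = 1 := by
  have : (16 : ℤ) * c = 8 * (2 * c) := by ring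
  rw [this, zpow_mul, hB8]
  exact Even.neg_one_zpow ⟨c, by ring⟩

include hA0 hB0 in
/-- generic reindex: `c ↦ -1 - c`. -/
lemma O_neg (u : ℤ) : O A B (-u) = O A B u := by
  rw [O, O, ← Equiv.tsum_eq (Equiv.subLeft (-1 : ℤ))
    (fun c : ℤ => A ^ (2 * (2 * c + 1) ^ 2) * B ^ (u * (2 * c + 1)))]
  refine tsum_congr fun c => ?_
  simp only [Equiv.subLeft_apply]
  rw [show (2 * (2 * (-1 - c) + 1) ^ 2) = 2 * (2 * c + 1) ^ 2 by ring,
    show u * (2 * (-1 - c) + 1) = -u * (2 * c + 1) by ring]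

include hA0 hB0 hB8 in
lemma O_add_eight (u : ℤ) : O A B (u + 8) = - O A B u := by
  rw [O, O, ← tsum_neg]
  refine tsum_congr fun c => ?_
  have h1 : (u + 8) * (2 * c + 1) = u * (2 * c + 1) + 8 * (2 * c + 1) := by ring
  rw [h1, zpow_add₀ hB0, show (8 : ℤ) * (2 * c + 1) = -(-8 * (2 * c + 1)) by ring, zpow_neg,
    B_pow_odd hB0 hB8 (2 * c + 1) ⟨c, by ring⟩]
  field_simp

include hA0 hB0 hB8 in
lemma O_four : O A B 4 = 0 := by
  have h1 : O A B (-4) = O A B 4 := O_neg hA0 hB0 4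
  have h2 : O A B (-4 + 8) = - O A B (-4) := O_add_eight hA0 hB0 hB8 (-4)
  norm_num [h1] at h2
  linear_combination h2 / 2

include hA0 hB0 hB8 in
lemma E_six : E A B 6 = E A B 2 := by
  rw [E, E, ← Equiv.tsum_eq (Equiv.neg ℤ) (fun c : ℤ => A ^ (8 * c ^ 2) * B ^ (2 * 2 * c))]
  refine tsum_congr fun c => ?_
  simp only [Equiv.neg_apply]
  rw [show (8 * (-c) ^ 2) = 8 * c ^ 2 by ring,
    show 2 * 2 * -c = 2 * 6 * c + -(16 * c) by ring, zpow_add₀ hB0, zpow_neg,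
    B_pow_16 hB0 hB8]
  norm_num

include hA0 hB0 hB8 in
lemma O_six : O A B 6 = - O A B 2 := by
  have h1 : O A B (-2) = O A B 2 := O_neg hA0 hB0 2
  have h2 : O A B (-2 + 8) = - O A B (-2) := O_add_eight hA0 hB0 hB8 (-2)
  norm_num [h1] at h2
  exact h2

lemma theta_eq (τ : ℂ) (k : ℤ) :
    thetaChar 1 ((k : ℝ) / 4) 0 τ =
      T (Complex.exp ((Real.pi : ℂ) * I * τ / 4)) (Complex.exp ((Real.pi : ℂ) * I / 8)) k := by
  unfold thetaChar T
  refine tsum_congr fun n => ?_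
  rw [← Complex.exp_int_mul, ← Complex.exp_int_mul, ← Complex.exp_add]
  congr 1
  push_cast
  ring

end StmtAux14

theorem stmt_14 (τ : ℂ) (hτ : 0 < τ.im) :
    thetaChar 1 0 0 τ ^ 2 * thetaChar 1 (1/4) 0 τ * thetaChar 1 (3/4) 0 τ
      - thetaChar 1 (1/4) 0 τ ^ 2 * thetaChar 1 (1/2) 0 τ ^ 2
      + thetaChar 1 (1/2) 0 τ ^ 2 * thetaChar 1 (3/4) 0 τ ^ 2 = 0 := by
  open StmtAux14 in
  set A : ℂ := Complex.exp ((Real.pi : ℂ) * I * τ / 4) with hAdef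
  set B : ℂ := Complex.exp ((Real.pi : ℂ) * I / 8) with hBdef
  have hA0 : A ≠ 0 := Complex.exp_ne_zero _
  have hB0 : B ≠ 0 := Complex.exp_ne_zero _
  have hA : ‖A‖ < 1 := by
    have h : (Real.pi : ℂ) * I * τ / 4 = ((Real.pi / 4 : ℝ) : ℂ) * (τ * I) := by push_cast; ring
    rw [hAdef, h, Complex.norm_exp]
    have : (((Real.pi / 4 : ℝ) : ℂ) * (τ * I)).re = Real.pi / 4 * (-τ.im) := by
      simp [Complex.mul_re, Complex.I_re, Complex.I_im]
    rw [this]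
    calc Real.exp (Real.pi / 4 * (-τ.im)) < Real.exp 0 := by
          apply Real.exp_lt_exp.mpr
          have := Real.pi_pos
          nlinarith
      _ = 1 := Real.exp_zero
  have hB : ‖B‖ = 1 := by
    rw [hBdef, Complex.norm_exp]
    have : ((Real.pi : ℂ) * I / 8).re = 0 := by
      simp [Complex.div_re, Complex.mul_re, Complex.I_re, Complex.I_im]
    rw [this, Real.exp_zero]
  have hB8 : B ^ (8 : ℤ) = -1 := by
    rw [hBdef, ← Complex.exp_int_mul,
      show ((8 : ℤ) : ℂ) * ((Real.pi : ℂ) * I / 8) = (Real.pi : ℂ) * I by push_cast; ring]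
    exact Complex.exp_pi_mul_I
  have h0 : thetaChar 1 0 0 τ = T A B 0 := by simpa using theta_eq τ 0
  have h1 : thetaChar 1 (1/4) 0 τ = T A B 1 := by simpa using theta_eq τ 1
  have h2 : thetaChar 1 (1/2) 0 τ = T A B 2 := by
    have := theta_eq τ 2
    norm_num at this
    simpa using this
  have h3 : thetaChar 1 (3/4) 0 τ = T A B 3 := by
    have := theta_eq τ 3
    norm_num at this
    simpa using this
  have m00 : T A B 0 * T A B 0 = O A B 0 * E A B 0 + E A B 0 * O A B 0 := by
    have := T_mul_T hA0 hB0 hA hB 0 0; norm_num at this; simpa using this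
  have m13 : T A B 1 * T A B 3 = E A B 4 * O A B 2 := by
    have h := T_mul_T hA0 hB0 hA hB 1 3
    norm_num at h
    rw [h, O_four hA0 hB0 hB8, O_neg hA0 hB0 2]
    ring
  have m11 : T A B 1 * T A B 1 = O A B 2 * E A B 0 + E A B 2 * O A B 0 := by
    have := T_mul_T hA0 hB0 hA hB 1 1; norm_num at this; simpa using this
  have m22 : T A B 2 * T A B 2 = E A B 4 * O A B 0 := by
    have h := T_mul_T hA0 hB0 hA hB 2 2
    norm_num at h
    rw [h, O_four hA0 hB0 hB8]
    ring
  have m33 : T A B 3 * T A B 3 = - O A B 2 * E A B 0 + E A B 2 * O A B 0 := by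
    have h := T_mul_T hA0 hB0 hA hB 3 3
    norm_num at h
    rw [h, O_six hA0 hB0 hB8, E_six hA0 hB0 hB8]
  calc thetaChar 1 0 0 τ ^ 2 * thetaChar 1 (1/4) 0 τ * thetaChar 1 (3/4) 0 τ
      - thetaChar 1 (1/4) 0 τ ^ 2 * thetaChar 1 (1/2) 0 τ ^ 2
      + thetaChar 1 (1/2) 0 τ ^ 2 * thetaChar 1 (3/4) 0 τ ^ 2
      = (T A B 0 * T A B 0) * (T A B 1 * T A B 3)
        - (T A B 1 * T A B 1) * (T A B 2 * T A B 2)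
        + (T A B 2 * T A B 2) * (T A B 3 * T A B 3) := by
        rw [h0, h1, h2, h3]; ring
    _ = (O A B 0 * E A B 0 + E A B 0 * O A B 0) * (E A B 4 * O A B 2)
        - (O A B 2 * E A B 0 + E A B 2 * O A B 0) * (E A B 4 * O A B 0)
        + (E A B 4 * O A B 0) * (- O A B 2 * E A B 0 + E A B 2 * O A B 0) := by
        rw [m00, m13, m11, m22, m33]
    _ = 0 := by ring
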